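/- Annihilator lemma: let E = ℂ^q with standard inner product and V a nonzero decomposable ℓ-vector. Define G₀^k(V) = {U in the k-th exterior power of E : U∨V = 0}. Then G₀^k(V) equals the orthogonal complement, in the k-th exterior power of E (with the Grassmann-extended inner product), of the image of the k-th exterior power of span(V)^⊥. -/

import Mathlib

open scoped InnerProductSpace

set_option maxHeartbeats 1000000
set_option synthInstance.maxHeartbeats 400000

section Aux

variable {F : Type*} [NormedAddCommGroup F] [InnerProductSpace ℂ F]

/-- product of two `ιMulti`s is the `ιMulti` of the appended tuple -/
lemma ιMulti_mul_ιMulti {R M : Type*} [CommRing R] [AddCommGroup M] [Module R M]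
    {p r : ℕ} (a : Fin p → M) (b : Fin r → M) :
    (ExteriorAlgebra.ιMulti R p a) * ExteriorAlgebra.ιMulti R r b
      = ExteriorAlgebra.ιMulti R (p + r) (Fin.append a b) := by
  rw [ExteriorAlgebra.ιMulti_apply, ExteriorAlgebra.ιMulti_apply, ExteriorAlgebra.ιMulti_apply,
    ← List.prod_append, List.ofFn_add]
  simp [Fin.append_left, Fin.append_right]

/-- The Gram-type alternating form `x ↦ det ⟪u i, x j⟫`. -/
noncomputable def gramAlt {n : ℕ} (u : Fin n → F) : F [⋀^Fin n]→ₗ[ℂ] ℂ where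
  toFun x := Matrix.det (Matrix.of fun i j => ⟪u i, x j⟫_ℂ)
  map_update_add' x j y z := by
    have h1 : ∀ w : F, (Matrix.of fun i j' => ⟪u i, (Function.update x j w) j'⟫_ℂ)
        = Matrix.updateCol (Matrix.of fun i j' => ⟪u i, x j'⟫_ℂ) j (fun i => ⟪u i, w⟫_ℂ) := by
      intro w
      ext i j'
      by_cases h : j' = j <;> simp [Matrix.updateCol_apply, h, Function.update]
    rw [h1, h1, h1]
    simp only [inner_add_right]
    convert Matrix.det_updateCol_add (Matrix.of fun i j' => ⟪u i, x j'⟫_ℂ) j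
      (fun i => ⟪u i, y⟫_ℂ) (fun i => ⟪u i, z⟫_ℂ) using 2 <;> congr!
  map_update_smul' x j c y := by
    have h1 : ∀ w : F, (Matrix.of fun i j' => ⟪u i, (Function.update x j w) j'⟫_ℂ)
        = Matrix.updateCol (Matrix.of fun i j' => ⟪u i, x j'⟫_ℂ) j (fun i => ⟪u i, w⟫_ℂ) := by
      intro w
      ext i j'
      by_cases h : j' = j <;> simp [Matrix.updateCol_apply, h, Function.update]
    rw [h1, h1]
    rw [show (fun i => ⟪u i, c • y⟫_ℂ) = fun i => c * ⟪u i, y⟫_ℂ by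
      ext i; simp [inner_smul_right]]
    rw [smul_eq_mul]
    convert Matrix.det_updateCol_smul (Matrix.of fun i j' => ⟪u i, x j'⟫_ℂ) j c
      (fun i => ⟪u i, y⟫_ℂ) using 2 <;> congr!
  map_eq_zero_of_eq' x i j hx hij := by
    exact Matrix.det_zero_of_column_eq hij (fun k => by simp [hx])

@[simp] lemma gramAlt_apply {n : ℕ} (u x : Fin n → F) :
    gramAlt u x = Matrix.det (Matrix.of fun i j => ⟪u i, x j⟫_ℂ) := rfl

/-- nonvanishing of the Gram determinant of a linearly independent family -/
lemma gram_det_ne_zero {n : ℕ} {v : Fin n → F} (hv : LinearIndependent ℂ v) :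
    Matrix.det (Matrix.of fun i j => ⟪v i, v j⟫_ℂ) ≠ 0 := by
  intro hdet
  obtain ⟨c, hc0, hc⟩ := (Matrix.exists_mulVec_eq_zero_iff.2 hdet)
  set x : F := ∑ j, c j • v j with hx
  have hvx : ∀ i, ⟪v i, x⟫_ℂ = 0 := by
    intro i
    have := congrFun hc i
    simp only [Matrix.mulVec, dotProduct, Matrix.of_apply, Pi.zero_apply] at this
    rw [hx, inner_sum]
    simpa [inner_smul_right, mul_comm] using this
  have hxx : x = 0 := by
    rw [← inner_self_eq_zero (𝕜 := ℂ) (x := x)]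
    rw [hx, sum_inner]
    simp only [inner_smul_left]
    rw [← hx]
    simp [hvx]
  exact hc0 ((Fintype.linearIndependent_iff.1 hv) c (by rw [← hx]; exact hxx) |> funext)

/-- a single-degree lift of an alternating form to the exterior algebra -/
noncomputable def liftAlt1 {n : ℕ} (f : F [⋀^Fin n]→ₗ[ℂ] ℂ) :
    ExteriorAlgebra ℂ F →ₗ[ℂ] ℂ :=
  ExteriorAlgebra.liftAlternating
    (Function.update (fun i => (0 : F [⋀^Fin i]→ₗ[ℂ] ℂ)) n f)

lemma liftAlt1_ιMulti {n : ℕ} (f : F [⋀^Fin n]→ₗ[ℂ] ℂ) (x : Fin n → F) :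
    liftAlt1 f (ExteriorAlgebra.ιMulti ℂ n x) = f x := by
  rw [liftAlt1, ExteriorAlgebra.liftAlternating_apply_ιMulti]
  simp

/-- everything in `Fin (p + r)` is a `castAdd` or a `natAdd` -/
lemma fin_addCases_exists {p r : ℕ} (a : Fin (p + r)) :
    (∃ i : Fin p, a = Fin.castAdd r i) ∨ (∃ j : Fin r, a = Fin.natAdd p j) := by
  rcases lt_or_ge (a : ℕ) p with h | h
  · exact Or.inl ⟨⟨a, h⟩, by ext; simp⟩
  · have ha := a.isLt
    exact Or.inr ⟨⟨(a : ℕ) - p, by omega⟩, by ext; simp [Fin.natAdd]; omega⟩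

/-- spanning of the exterior power by wedges of sorted tuples from a spanning family -/
lemma exteriorPower_le_span {κ : Type*} [Fintype κ] [LinearOrder κ] (e : κ → F)
    (hspan : ∀ x : F, x ∈ Submodule.span ℂ (Set.range e)) (k : ℕ) :
    (⋀[ℂ]^k F : Submodule ℂ (ExteriorAlgebra ℂ F)) ≤ Submodule.span ℂ
      (Set.range (fun S : {S : Finset κ // S.card = k} =>
        (ExteriorAlgebra.ιMulti ℂ k (e ∘ S.1.orderEmbOfFin S.2) : ExteriorAlgebra ℂ F))) := by
  classical
  rw [← ExteriorAlgebra.ιMulti_span_fixedDegree, Submodule.span_le]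
  rintro _ ⟨w, rfl⟩
  have hc : ∀ i : Fin k, ∃ c : κ → ℂ, ∑ j, c j • e j = w i := fun i =>
    (Submodule.mem_span_range_iff_exists_fun ℂ).1 (hspan (w i))
  choose a ha using hc
  have hw : w = fun i => ∑ j, a i j • e j := by funext i; rw [ha]
  rw [hw]
  have hexp : (ExteriorAlgebra.ιMulti ℂ k (fun i => ∑ j, a i j • e j) : ExteriorAlgebra ℂ F)
      = ∑ r : Fin k → κ, (∏ i, a i (r i)) • ExteriorAlgebra.ιMulti ℂ k (e ∘ r) := by
    have h1 := MultilinearMap.map_sum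
      ((ExteriorAlgebra.ιMulti ℂ k (M := F)).toMultilinearMap) (fun i j => a i j • e j)
    rw [AlternatingMap.coe_multilinearMap] at h1
    rw [h1]
    refine Finset.sum_congr rfl fun r _ => ?_
    have h2 := MultilinearMap.map_smul_univ
      ((ExteriorAlgebra.ιMulti ℂ k (M := F)).toMultilinearMap) (fun i => a i (r i)) (fun i => e (r i))
    rw [AlternatingMap.coe_multilinearMap] at h2
    exact h2
  rw [hexp]
  apply Submodule.sum_mem
  intro r _
  apply Submodule.smul_mem
  by_cases hr : Function.Injective r
  · set S : Finset κ := Finset.image r Finset.univ with hS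
    have hcard : S.card = k := by
      rw [hS, Finset.card_image_of_injective _ hr, Finset.card_univ, Fintype.card_fin]
    have hmem : ∀ i, r i ∈ S := fun i => by simp [hS]
    set g : Fin k → Fin k := fun i => (S.orderIsoOfFin hcard).symm ⟨r i, hmem i⟩ with hg
    have hginj : Function.Injective g := by
      intro i j hij
      apply hr
      have h2 : ((S.orderIsoOfFin hcard) (g i) : κ) = ((S.orderIsoOfFin hcard) (g j) : κ) :=
        congrArg (fun z => ((S.orderIsoOfFin hcard) z : κ)) hij
      rw [hg] at h2
      simpa [OrderIso.apply_symm_apply] using h2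
    set σ : Equiv.Perm (Fin k) := Equiv.ofBijective g (Finite.injective_iff_bijective.1 hginj)
      with hσ
    have hcomp : (e ∘ S.orderEmbOfFin hcard) ∘ σ = e ∘ r := by
      funext i
      simp only [Function.comp_apply, hσ, Equiv.ofBijective_apply, hg]
      congr 1
      rw [← Finset.coe_orderIsoOfFin_apply, OrderIso.apply_symm_apply]
    have hperm := AlternatingMap.map_perm
      (ExteriorAlgebra.ιMulti ℂ k (M := F)) (e ∘ S.orderEmbOfFin hcard) σ
    rw [hcomp] at hperm
    rw [hperm]
    have hbase : (ExteriorAlgebra.ιMulti ℂ k (e ∘ S.orderEmbOfFin hcard) : ExteriorAlgebra ℂ F)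
        ∈ Submodule.span ℂ (Set.range (fun S : {S : Finset κ // S.card = k} =>
          (ExteriorAlgebra.ιMulti ℂ k (e ∘ S.1.orderEmbOfFin S.2) : ExteriorAlgebra ℂ F))) :=
      Submodule.subset_span ⟨⟨S, hcard⟩, rfl⟩
    rcases Int.units_eq_one_or (Equiv.Perm.sign σ) with h | h <;> rw [h]
    · simpa using hbase
    · simpa using Submodule.neg_mem _ hbase
  · obtain ⟨i, j, hij, hne⟩ := Function.not_injective_iff.1 hr
    rw [AlternatingMap.map_eq_zero_of_eq _ _ (by simp [Function.comp_apply, hij]) hne]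
    exact Submodule.zero_mem _

/-- determinant of the cross Gram matrix of orthonormal sorted tuples -/
lemma det_orthonormal_blocks {κ : Type*} [LinearOrder κ] (e : κ → F)
    (ho : Orthonormal ℂ e) {k : ℕ}
    (S T : Finset κ) (hS : S.card = k) (hT : T.card = k) :
    Matrix.det (Matrix.of fun i j =>
        ⟪e (T.orderEmbOfFin hT i), e (S.orderEmbOfFin hS j)⟫_ℂ)
      = if T = S then 1 else 0 := by
  classical
  have he : ∀ a b : κ, ⟪e a, e b⟫_ℂ = if a = b then 1 else 0 := fun a b =>
    orthonormal_iff_ite.1 ho a b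
  by_cases h : T = S
  · subst h
    rw [if_pos rfl]
    have hone : (Matrix.of fun i j =>
        ⟪e (T.orderEmbOfFin hT i), e (T.orderEmbOfFin hS j)⟫_ℂ)
        = (1 : Matrix (Fin k) (Fin k) ℂ) := by
      ext i j
      rw [Matrix.of_apply, he, Matrix.one_apply]
      congr 1
      simp only [eq_iff_iff]
      constructor
      · intro hh
        exact (T.orderEmbOfFin hT).injective hh
      · rintro rfl; rfl
    rw [hone, Matrix.det_one]
  · rw [if_neg h]
    have hne : ∃ t ∈ T, t ∉ S := by
      by_contra hcon
      push_neg at hcon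
      exact h (Finset.eq_of_subset_of_card_le (fun t ht => hcon t ht) (by rw [hS, hT]))
    obtain ⟨t, htT, htS⟩ := hne
    obtain ⟨i₀, hi₀⟩ : ∃ i₀, T.orderEmbOfFin hT i₀ = t := by
      have hrg := Finset.range_orderEmbOfFin T hT
      have : t ∈ Set.range (T.orderEmbOfFin hT) := by rw [hrg]; exact_mod_cast htT
      exact this
    apply Matrix.det_eq_zero_of_row_eq_zero i₀
    intro j
    rw [Matrix.of_apply, hi₀, he, if_neg]
    intro he2
    exact htS (he2 ▸ Finset.orderEmbOfFin_mem S hS j)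

/-- wedging with `v` kills tuples with an entry in the span of `v` -/
lemma ιMulti_mul_eq_zero {M : Type*} [AddCommGroup M] [Module ℂ M] {k ℓ : ℕ}
    (g : Fin k → M) (v : Fin ℓ → M) (i₀ : Fin k)
    (hg : g i₀ ∈ Submodule.span ℂ (Set.range v)) :
    (ExteriorAlgebra.ιMulti ℂ k g) * ExteriorAlgebra.ιMulti ℂ ℓ v = 0 := by
  rw [ιMulti_mul_ιMulti]
  apply AlternatingMap.map_linearDependent
  intro hLI
  have h1 : Fin.append g v (Fin.castAdd ℓ i₀)
      ∉ Submodule.span ℂ (Fin.append g v '' (Set.range (Fin.natAdd k))) := by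
    apply hLI.notMem_span_image
    rintro ⟨j, hj⟩
    have := congrArg Fin.val hj
    simp [Fin.natAdd, Fin.castAdd, Fin.castLE] at this
    omega
  apply h1
  have himg : Fin.append g v '' (Set.range (Fin.natAdd k)) = Set.range v := by
    rw [← Set.range_comp]
    exact congrArg Set.range (funext fun j => Fin.append_right _ _ _)
  rw [himg, Fin.append_left]
  exact hg

/-- block evaluation of the Gram alternating form on appended tuples -/
lemma gramAlt_append {k ℓ : ℕ} (a b : Fin k → F) (v : Fin ℓ → F)
    (h2 : ∀ i j, ⟪v i, b j⟫_ℂ = 0) :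
    gramAlt (Fin.append a v) (Fin.append b v)
      = Matrix.det (Matrix.of fun i j => ⟪a i, b j⟫_ℂ)
        * Matrix.det (Matrix.of fun i j => ⟪v i, v j⟫_ℂ) := by
  rw [gramAlt_apply]
  have hM : (Matrix.of fun i j => ⟪Fin.append a v i, Fin.append b v j⟫_ℂ)
      = Matrix.submatrix (Matrix.fromBlocks (Matrix.of fun i j => ⟪a i, b j⟫_ℂ)
          (Matrix.of fun i j => ⟪a i, v j⟫_ℂ) (Matrix.of fun i j => ⟪v i, b j⟫_ℂ)
          (Matrix.of fun i j => ⟪v i, v j⟫_ℂ)) finSumFinEquiv.symm finSumFinEquiv.symm := by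
    ext i j
    rcases fin_addCases_exists i with ⟨i', rfl⟩ | ⟨i', rfl⟩ <;>
      rcases fin_addCases_exists j with ⟨j', rfl⟩ | ⟨j', rfl⟩ <;>
      simp [Fin.append_left, Fin.append_right, finSumFinEquiv_symm_apply_castAdd,
        finSumFinEquiv_symm_apply_natAdd, Matrix.fromBlocks]
  rw [hM, Matrix.det_submatrix_equiv_self]
  have hzero : (Matrix.of fun i j => ⟪v i, b j⟫_ℂ) = 0 := by
    ext i j; exact h2 i j
  rw [hzero, Matrix.det_fromBlocks_zero₂₁]

end Aux

/-- The decomposable `k`-vector `w₁ ∨ ⋯ ∨ w_k`, as an element of the `k`-th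
exterior power (a submodule of the exterior algebra). -/
noncomputable def wedgeTuple {E : Type*} [NormedAddCommGroup E]
    [InnerProductSpace ℂ E] (k : ℕ) (w : Fin k → E) : ⋀[ℂ]^k E :=
  ⟨ExteriorAlgebra.ιMulti ℂ k w, ExteriorAlgebra.ιMulti_range ℂ k ⟨w, rfl⟩⟩

/-- Annihilator lemma: let `V = v₁ ∨ ⋯ ∨ v_ℓ` be a nonzero decomposable `ℓ`-vector
in `ℂ^q` and `B` the canonical Grassmann (Hermitian) extension of the inner product
to the `k`-th exterior power (characterized by Gram determinants on decomposables).
Then the annihilator `{U : U ∨ V = 0}` equals the `B`-orthogonal complement of the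
image of the `k`-th exterior power of `span(V)^⊥`. -/
theorem annihilator_eq_orthogonal_complement {q k ℓ : ℕ}
    (v : Fin ℓ → EuclideanSpace ℂ (Fin q)) (hv : LinearIndependent ℂ v)
    (B : ⋀[ℂ]^k (EuclideanSpace ℂ (Fin q)) →ₗ⋆[ℂ]
      ⋀[ℂ]^k (EuclideanSpace ℂ (Fin q)) →ₗ[ℂ] ℂ)
    (hB : ∀ a b : Fin k → EuclideanSpace ℂ (Fin q),
      B (wedgeTuple k a) (wedgeTuple k b) =
        Matrix.det (Matrix.of fun i j => ⟪a i, b j⟫_ℂ)) :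
    {U : ⋀[ℂ]^k (EuclideanSpace ℂ (Fin q)) |
        (U : ExteriorAlgebra ℂ (EuclideanSpace ℂ (Fin q))) *
          (ExteriorAlgebra.ιMulti ℂ ℓ v) = 0} =
      {U : ⋀[ℂ]^k (EuclideanSpace ℂ (Fin q)) |
        ∀ w : Fin k → EuclideanSpace ℂ (Fin q),
          (∀ i, w i ∈ (Submodule.span ℂ (Set.range v))ᗮ) →
            B (wedgeTuple k w) U = 0} := by
  classical
  set W : Submodule ℂ (EuclideanSpace ℂ (Fin q)) := Submodule.span ℂ (Set.range v) with hWdef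
  have hfinW : Module.finrank ℂ W = ℓ := by
    rw [hWdef, finrank_span_eq_card hv, Fintype.card_fin]
  set m := Module.finrank ℂ Wᗮ with hm
  set bW : OrthonormalBasis (Fin ℓ) ℂ W :=
    (stdOrthonormalBasis ℂ W).reindex (finCongr hfinW) with hbW
  set bW' : OrthonormalBasis (Fin m) ℂ Wᗮ := stdOrthonormalBasis ℂ ↥Wᗮ with hbW'
  set e : Fin (ℓ + m) → EuclideanSpace ℂ (Fin q) :=
    Fin.append (fun i => (bW i : EuclideanSpace ℂ (Fin q)))
      (fun j => (bW' j : EuclideanSpace ℂ (Fin q))) with he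
  have he_lowmem : ∀ i : Fin ℓ, e (Fin.castAdd m i) ∈ W := by
    intro i; rw [he, Fin.append_left]; exact (bW i).2
  have he_highmem : ∀ j : Fin m, e (Fin.natAdd ℓ j) ∈ Wᗮ := by
    intro j; rw [he, Fin.append_right]; exact (bW' j).2
  have he_low : ∀ a : Fin (ℓ + m), (a : ℕ) < ℓ → e a ∈ W := by
    intro a ha
    rcases fin_addCases_exists a with ⟨i, rfl⟩ | ⟨j, rfl⟩
    · exact he_lowmem i
    · exfalso; simp only [Fin.coe_natAdd] at ha; omega
  have he_high : ∀ a : Fin (ℓ + m), ℓ ≤ (a : ℕ) → e a ∈ Wᗮ := by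
    intro a ha
    rcases fin_addCases_exists a with ⟨i, rfl⟩ | ⟨j, rfl⟩
    · exfalso; have := i.isLt; simp only [Fin.coe_castAdd] at ha; omega
    · exact he_highmem j
  have he_on : ∀ a b : Fin (ℓ + m), ⟪e a, e b⟫_ℂ = if a = b then 1 else 0 := by
    intro a b
    rcases fin_addCases_exists a with ⟨i, rfl⟩ | ⟨i, rfl⟩ <;>
      rcases fin_addCases_exists b with ⟨j, rfl⟩ | ⟨j, rfl⟩
    · rw [he, Fin.append_left, Fin.append_left, ← Submodule.coe_inner,
        orthonormal_iff_ite.1 bW.orthonormal i j]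
      congr 1
      simp only [eq_iff_iff, Fin.ext_iff, Fin.coe_castAdd]
      try omega
    · have hne : Fin.castAdd m i ≠ Fin.natAdd ℓ j := by
        intro hE
        have h3 := congrArg Fin.val hE
        simp only [Fin.coe_castAdd, Fin.coe_natAdd] at h3
        have := i.isLt
        omega
      rw [if_neg hne]
      exact (Submodule.mem_orthogonal W _).1 (he_highmem j) _ (he_lowmem i)
    · have hne : Fin.natAdd ℓ i ≠ Fin.castAdd m j := by
        intro hE
        have h3 := congrArg Fin.val hE
        simp only [Fin.coe_castAdd, Fin.coe_natAdd] at h3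
        have := j.isLt
        omega
      rw [if_neg hne]
      rw [← inner_conj_symm,
        (Submodule.mem_orthogonal W _).1 (he_highmem i) _ (he_lowmem j), map_zero]
    · rw [he, Fin.append_right, Fin.append_right, ← Submodule.coe_inner,
        orthonormal_iff_ite.1 bW'.orthonormal i j]
      congr 1
      simp only [eq_iff_iff, Fin.ext_iff, Fin.coe_natAdd]
      omega
  have he_ortho : Orthonormal ℂ e := orthonormal_iff_ite.2 he_on
  have hWle : W ≤ Submodule.span ℂ (Set.range e) := by
    intro x hx
    have hrepr := bW.sum_repr ⟨x, hx⟩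
    have hxe : x = ∑ i, bW.repr ⟨x, hx⟩ i • (bW i : EuclideanSpace ℂ (Fin q)) := by
      calc x = ((∑ i, bW.repr ⟨x, hx⟩ i • bW i : W) : EuclideanSpace ℂ (Fin q)) := by
            rw [hrepr]
        _ = ∑ i, bW.repr ⟨x, hx⟩ i • (bW i : EuclideanSpace ℂ (Fin q)) := by push_cast; rfl
    rw [hxe]
    refine Submodule.sum_mem _ fun i _ => Submodule.smul_mem _ _ (Submodule.subset_span ?_)
    exact ⟨Fin.castAdd m i, by rw [he, Fin.append_left]⟩
  have hW'le : Wᗮ ≤ Submodule.span ℂ (Set.range e) := by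
    intro x hx
    have hrepr := bW'.sum_repr ⟨x, hx⟩
    have hxe : x = ∑ i, bW'.repr ⟨x, hx⟩ i • (bW' i : EuclideanSpace ℂ (Fin q)) := by
      calc x = ((∑ i, bW'.repr ⟨x, hx⟩ i • bW' i : Wᗮ) : EuclideanSpace ℂ (Fin q)) := by
            rw [hrepr]
        _ = ∑ i, bW'.repr ⟨x, hx⟩ i • (bW' i : EuclideanSpace ℂ (Fin q)) := by push_cast; rfl
    rw [hxe]
    refine Submodule.sum_mem _ fun i _ => Submodule.smul_mem _ _ (Submodule.subset_span ?_)
    exact ⟨Fin.natAdd ℓ i, by rw [he, Fin.append_right]⟩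
  have hspan : ∀ x : EuclideanSpace ℂ (Fin q), x ∈ Submodule.span ℂ (Set.range e) := by
    intro x
    have htop : (W ⊔ Wᗮ : Submodule ℂ (EuclideanSpace ℂ (Fin q))) = ⊤ :=
      Submodule.sup_orthogonal_of_hasOrthogonalProjection
    have hx : x ∈ W ⊔ Wᗮ := htop ▸ Submodule.mem_top
    obtain ⟨y, hy, z, hz, rfl⟩ := Submodule.mem_sup.1 hx
    exact Submodule.add_mem _ (hWle hy) (hW'le hz)
  ext U
  simp only [Set.mem_setOf_eq]
  obtain ⟨c, hc⟩ : ∃ c : {S : Finset (Fin (ℓ + m)) // S.card = k} → ℂ,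
      ∑ S, c S • (ExteriorAlgebra.ιMulti ℂ k (e ∘ S.1.orderEmbOfFin S.2))
        = (U : ExteriorAlgebra ℂ (EuclideanSpace ℂ (Fin q))) :=
    (Submodule.mem_span_range_iff_exists_fun ℂ).1 (exteriorPower_le_span e hspan k U.2)
  have hUsub : U = ∑ S, c S • wedgeTuple k (e ∘ S.1.orderEmbOfFin S.2) := by
    apply Subtype.ext
    rw [← hc]
    push_cast
    rfl
  -- evaluation of the B-pairing on basic wedges
  have hBval : ∀ S T : {S : Finset (Fin (ℓ + m)) // S.card = k},
      B (wedgeTuple k (e ∘ T.1.orderEmbOfFin T.2)) (wedgeTuple k (e ∘ S.1.orderEmbOfFin S.2))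
        = if S = T then 1 else 0 := by
    intro S T
    rw [hB]
    have := det_orthonormal_blocks e he_ortho S.1 T.1 S.2 T.2
    rw [show (Matrix.of fun i j => ⟪(e ∘ T.1.orderEmbOfFin T.2) i,
        (e ∘ S.1.orderEmbOfFin S.2) j⟫_ℂ)
      = (Matrix.of fun i j =>
          ⟪e (T.1.orderEmbOfFin T.2 i), e (S.1.orderEmbOfFin S.2 j)⟫_ℂ) from rfl, this]
    by_cases h : S = T
    · subst h; simp
    · rw [if_neg (fun hh => h (Subtype.ext hh.symm)), if_neg h]
  constructor
  · -- annihilator ⟹ orthogonal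
    intro hU w hw
    -- high coefficients vanish
    have hhigh : ∀ T : {S : Finset (Fin (ℓ + m)) // S.card = k},
        (∀ s ∈ T.1, ℓ ≤ (s : ℕ)) → c T = 0 := by
      intro T hT
      set γ : ℂ := Matrix.det (Matrix.of fun i j => ⟪v i, v j⟫_ℂ) with hγdef
      have hγ : γ ≠ 0 := gram_det_ne_zero hv
      set Ψ := liftAlt1 (gramAlt (Fin.append (e ∘ T.1.orderEmbOfFin T.2) v)) with hΨ
      have heval : ∀ S : {S : Finset (Fin (ℓ + m)) // S.card = k},
          Ψ ((ExteriorAlgebra.ιMulti ℂ k (e ∘ S.1.orderEmbOfFin S.2))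
            * ExteriorAlgebra.ιMulti ℂ ℓ v) = if S = T then γ else 0 := by
        intro S
        by_cases hS : ∀ s ∈ S.1, ℓ ≤ (s : ℕ)
        · rw [ιMulti_mul_ιMulti, hΨ, liftAlt1_ιMulti,
            gramAlt_append (e ∘ T.1.orderEmbOfFin T.2) (e ∘ S.1.orderEmbOfFin S.2) v
              (fun i j => (Submodule.mem_orthogonal W _).1
              (he_high _ (hS _ (Finset.orderEmbOfFin_mem S.1 S.2 j)))
              _ (Submodule.subset_span ⟨i, rfl⟩))]
          simp only [Function.comp_apply]
          rw [det_orthonormal_blocks e he_ortho S.1 T.1 S.2 T.2]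
          by_cases h : S = T
          · subst h; rw [if_pos rfl, if_pos rfl, one_mul]
          · rw [if_neg (fun hh => h (Subtype.ext hh.symm)), if_neg h, zero_mul]
        · push_neg at hS
          obtain ⟨s, hsS, hs⟩ := hS
          obtain ⟨i₀, hi₀⟩ : ∃ i₀, S.1.orderEmbOfFin S.2 i₀ = s := by
            have hrg := Finset.range_orderEmbOfFin S.1 S.2
            have : s ∈ Set.range (S.1.orderEmbOfFin S.2) := by rw [hrg]; exact_mod_cast hsS
            exact this
          have hST : S ≠ T := by
            intro hh
            subst hh
            exact absurd (hT s hsS) (by omega)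
          rw [ιMulti_mul_eq_zero (e ∘ S.1.orderEmbOfFin S.2) v i₀
            (by rw [Function.comp_apply, hi₀]; exact (hWdef ▸ he_low s hs)), map_zero,
            if_neg hST]
      have h0 : (0 : ℂ) = Ψ ((U : ExteriorAlgebra ℂ (EuclideanSpace ℂ (Fin q)))
          * ExteriorAlgebra.ιMulti ℂ ℓ v) := by
        rw [hU, map_zero]
      rw [← hc, Finset.sum_mul] at h0
      simp_rw [smul_mul_assoc] at h0
      rw [map_sum] at h0
      simp_rw [map_smul, heval, smul_eq_mul, mul_ite, mul_zero] at h0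
      rw [Finset.sum_ite_eq' Finset.univ T (fun S => c S * γ)] at h0
      simp only [Finset.mem_univ, if_true] at h0
      exact (mul_eq_zero.1 h0.symm).resolve_right hγ
    -- now prove the orthogonality
    rw [hUsub, map_sum]
    simp_rw [map_smul]
    apply Finset.sum_eq_zero
    intro S _
    by_cases hS : ∀ s ∈ S.1, ℓ ≤ (s : ℕ)
    · rw [hhigh S hS, zero_smul]
    · push_neg at hS
      obtain ⟨s, hsS, hs⟩ := hS
      obtain ⟨j₀, hj₀⟩ : ∃ j₀, S.1.orderEmbOfFin S.2 j₀ = s := by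
        have hrg := Finset.range_orderEmbOfFin S.1 S.2
        have : s ∈ Set.range (S.1.orderEmbOfFin S.2) := by rw [hrg]; exact_mod_cast hsS
        exact this
      have hz : B (wedgeTuple k w) (wedgeTuple k (e ∘ S.1.orderEmbOfFin S.2)) = 0 := by
        rw [hB]
        apply Matrix.det_eq_zero_of_column_eq_zero j₀
        intro i
        rw [Matrix.of_apply]
        show ⟪w i, (e ∘ S.1.orderEmbOfFin S.2) j₀⟫_ℂ = 0
        rw [Function.comp_apply, hj₀, ← inner_conj_symm,
          (Submodule.mem_orthogonal W (w i)).1 (hw i) (e s) (he_low s hs), map_zero]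
      rw [hz, smul_zero]
  · -- orthogonal ⟹ annihilator
    intro hO
    have hhighc : ∀ T : {S : Finset (Fin (ℓ + m)) // S.card = k},
        (∀ s ∈ T.1, ℓ ≤ (s : ℕ)) → c T = 0 := by
      intro T hT
      have h1 := hO (e ∘ T.1.orderEmbOfFin T.2)
        (fun i => he_high _ (hT _ (Finset.orderEmbOfFin_mem T.1 T.2 i)))
      rw [hUsub, map_sum] at h1
      simp_rw [map_smul, hBval, smul_eq_mul, mul_ite, mul_one, mul_zero] at h1
      rw [Finset.sum_ite_eq' Finset.univ T (fun S => c S)] at h1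
      simp only [Finset.mem_univ, if_true] at h1
      exact h1
    rw [← hc, Finset.sum_mul]
    apply Finset.sum_eq_zero
    intro S _
    rw [smul_mul_assoc]
    by_cases hS : ∀ s ∈ S.1, ℓ ≤ (s : ℕ)
    · rw [hhighc S hS, zero_smul]
    · push_neg at hS
      obtain ⟨s, hsS, hs⟩ := hS
      obtain ⟨i₀, hi₀⟩ : ∃ i₀, S.1.orderEmbOfFin S.2 i₀ = s := by
        have hrg := Finset.range_orderEmbOfFin S.1 S.2
        have : s ∈ Set.range (S.1.orderEmbOfFin S.2) := by rw [hrg]; exact_mod_cast hsS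
        exact this
      rw [ιMulti_mul_eq_zero (e ∘ S.1.orderEmbOfFin S.2) v i₀
        (by rw [Function.comp_apply, hi₀]; exact hWdef ▸ he_low s hs), smul_zero]
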